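/- Let σ be a complex 2×2 involution with σ² = I, let S : ℂ² → ℂ² ⊗ ℂ² be defined by S(v) = |0⟩ ⊗ v + |1⟩ ⊗ σv, and let α be real. Then (exp(i α σ_x) ⊗ I) ∘ S = (I ⊗ exp(i α σ)) ∘ S. -/

import Mathlib

open Matrix Kronecker Complex

lemma exp_smul_of_sq_one (A : Matrix (Fin 2) (Fin 2) ℂ) (h : A * A = 1) (c : ℂ) :
    NormedSpace.exp (c • A)
      = Complex.cosh c • (1 : Matrix (Fin 2) (Fin 2) ℂ) + Complex.sinh c • A := by
  rw [NormedSpace.exp_eq_tsum ℂ]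
  refine HasSum.tsum_eq ?_
  have hA2 : ∀ n : ℕ, A ^ (2 * n) = 1 := fun n => by
    rw [pow_mul, sq, h, one_pow]
  refine HasSum.even_add_odd ?_ ?_
  · have := (Complex.hasSum_cosh c).smul_const (1 : Matrix (Fin 2) (Fin 2) ℂ)
    convert this using 2 with n
    case e'_3 => rfl
    rw [smul_pow, hA2, smul_smul]
    congr 1
    rw [div_eq_mul_inv, mul_comm]
  · have := (Complex.hasSum_sinh c).smul_const A
    convert this using 2 with n
    case e'_3 => rfl
    rw [smul_pow, pow_succ A, hA2, one_mul, smul_smul]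
    congr 1
    rw [div_eq_mul_inv, mul_comm]

theorem stator_exp_eigenoperator (σ : Matrix (Fin 2) (Fin 2) ℂ) (hσ : σ * σ = 1)
    (α : ℝ)
    (S : (Fin 2 → ℂ) → (Fin 2 × Fin 2 → ℂ))
    (hS : ∀ v : Fin 2 → ℂ, S v = fun p =>
      (![(1 : ℂ), 0] p.1) * v p.2 + (![(0 : ℂ), 1] p.1) * σ.mulVec v p.2)
    (σx : Matrix (Fin 2) (Fin 2) ℂ) (hx : σx = !![0, 1; 1, 0]) :
    ∀ v : Fin 2 → ℂ,
      ((NormedSpace.exp ((Complex.I * (α : ℂ)) • σx)) ⊗ₖ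
          (1 : Matrix (Fin 2) (Fin 2) ℂ)).mulVec (S v)
        = ((1 : Matrix (Fin 2) (Fin 2) ℂ) ⊗ₖ
          (NormedSpace.exp ((Complex.I * (α : ℂ)) • σ))).mulVec (S v) := by
  intro v
  have hxx : σx * σx = 1 := by
    rw [hx]
    norm_num [Matrix.mul_fin_two, ← Matrix.one_fin_two]
  have hc : (Complex.I * (α : ℂ)) = (α : ℂ) * Complex.I := mul_comm _ _
  rw [exp_smul_of_sq_one σ hσ, exp_smul_of_sq_one σx hxx, hc,
    Complex.cosh_mul_I, Complex.sinh_mul_I]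
  have hσσ : ∀ i j, (σ * σ) i j = (1 : Matrix (Fin 2) (Fin 2) ℂ) i j := fun i j => by
    rw [hσ]
  have h00 := hσσ 0 0
  have h01 := hσσ 0 1
  have h10 := hσσ 1 0
  have h11 := hσσ 1 1
  simp only [Matrix.mul_apply, Fin.sum_univ_two, Matrix.one_apply, Fin.isValue,
    if_true, if_false, ne_eq, one_ne_zero, zero_ne_one, ite_true, ite_false,
    reduceIte] at h00 h01 h10 h11
  set c := Complex.cos (α : ℂ) with hcc
  set s := Complex.sin (α : ℂ) with hss
  funext p
  obtain ⟨i, j⟩ := p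
  simp only [hS, hx, Matrix.mulVec, dotProduct, Fintype.sum_prod_type, Fin.sum_univ_two,
    Matrix.kroneckerMap_apply, Matrix.add_apply, Matrix.smul_apply, Matrix.one_apply,
    smul_eq_mul]
  fin_cases i <;> fin_cases j <;>
    simp [Matrix.one_apply, Matrix.cons_val_zero, Matrix.cons_val_one, Matrix.head_cons] <;>
    [skip; skip;
     linear_combination -(s * Complex.I) * (v 0 * h00 + v 1 * h01);
     linear_combination -(s * Complex.I) * (v 0 * h10 + v 1 * h11)] <;>
    ring
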